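/- Let a, b, c, d, τ, η ∈ ℝ with b ≠ 0 and ad − bc = 1, let t_m, ξ_m ∈ ℝ, let c₀ ∈ ℂ with c₀ ≠ 0 and c_p > 0, and define f(t) = c₀ · e^{−c_p (t − t_m)²} · e^{i( ((ξ_m − τ)/b) t − (a/(2b)) t² )}. Then equality holds in the second-order Heisenberg uncertainty principle in the OLCT domain: (∫_ℝ (t − t_m)² |f(t)|² dt) · (∫_ℝ (ξ − ξ_m)² |O_f^J(ξ)|² dξ) = (b²/4) · (∫_ℝ |f(t)|² dt)². -/

import Mathlib

open MeasureTheory Real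

/-- The offset linear canonical transform (OLCT) with parameters `a, b, d, τ, η` (up to the
unimodular constant of the kernel, which does not affect the modulus). -/
noncomputable def OLCT (a b d τ η : ℝ) (f : ℝ → ℂ) (ξ : ℝ) : ℂ :=
  ((Real.sqrt (2 * π * |b|))⁻¹ : ℝ) *
    ∫ t : ℝ, f t * Complex.exp (Complex.I *
      (((a / (2 * b)) * t ^ 2 - (1 / b) * t * (ξ - τ) - (1 / b) * ξ * (d * τ - b * η)
        + (d / (2 * b)) * (ξ ^ 2 + τ ^ 2) : ℝ) : ℂ))

lemma gauss_sq_moment {α : ℝ} (hα : 0 < α) :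
    ∫ x : ℝ, x ^ 2 * Real.exp (-α * x ^ 2) = Real.sqrt (π / α) / (2 * α) := by
  have key : ∫ x : ℝ, x ^ 2 * Real.exp (-α * x ^ 2)
      = 2 * ∫ x in Set.Ioi (0:ℝ), x ^ 2 * Real.exp (-α * x ^ 2) := by
    have := integral_comp_abs (f := fun x : ℝ => x ^ 2 * Real.exp (-α * x ^ 2))
    simpa [sq_abs] using this
  have h2 : ∫ x in Set.Ioi (0:ℝ), x ^ 2 * Real.exp (-α * x ^ 2)
      = ∫ x in Set.Ioi (0:ℝ), x ^ (2:ℝ) * Real.exp (-α * x ^ (2:ℝ)) := by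
    refine setIntegral_congr_fun measurableSet_Ioi (fun x hx => ?_)
    rw [show x ^ (2:ℝ) = x ^ (2:ℕ) by rw [← Real.rpow_natCast x 2]; norm_num]
  have h3 := integral_rpow_mul_exp_neg_mul_rpow (p := 2) (q := 2) two_pos (by norm_num) hα
  have hg : Real.Gamma (((2:ℝ) + 1) / 2) = Real.sqrt π / 2 := by
    rw [show ((2:ℝ) + 1)/2 = 1/2 + 1 by norm_num, Real.Gamma_add_one (by norm_num),
      Real.Gamma_one_half_eq]
    ring
  have ha : α ^ (-((2:ℝ) + 1) / 2) = 1 / (α * Real.sqrt α) := by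
    rw [show -((2:ℝ) + 1)/2 = -(1 + 1/2) by norm_num, Real.rpow_neg hα.le,
      Real.rpow_add hα, Real.rpow_one, ← Real.sqrt_eq_rpow]
    rw [one_div]
  have hsa : Real.sqrt α ≠ 0 := by positivity
  have hsa2 : Real.sqrt α * Real.sqrt α = α := Real.mul_self_sqrt hα.le
  rw [key, h2, h3, hg, ha, Real.sqrt_div pi_pos.le]
  field_simp

lemma sq_expand (x y : ℝ) : ((x:ℂ) + Complex.I * y) ^ 2
    = ((x ^ 2 - y ^ 2 : ℝ) : ℂ) + Complex.I * ((2 * x * y : ℝ) : ℂ) := by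
  push_cast
  linear_combination (y:ℂ) ^ 2 * Complex.I_sq

lemma OLCT_norm_sq (a b c d τ η : ℝ)
    (hb : b ≠ 0) (hdet : a * d - b * c = 1) (tm ξm : ℝ)
    (c₀ : ℂ) (hc₀ : c₀ ≠ 0) (cp : ℝ) (hcp : 0 < cp)
    (f : ℝ → ℂ)
    (hf : f = fun t : ℝ => c₀ * Complex.exp (-((cp : ℂ) * ((t : ℂ) - (tm : ℂ)) ^ 2)) *
      Complex.exp (Complex.I *
        ((((ξm - τ) / b) * t - (a / (2 * b)) * t ^ 2 : ℝ) : ℂ))) :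
    ∀ ξ : ℝ, ‖OLCT a b d τ η f ξ‖ ^ 2 =
      ‖c₀‖ ^ 2 / (2 * π * |b|) * (π / cp) *
        Real.exp (-((2 * cp * b ^ 2)⁻¹ * (ξ - ξm) ^ 2)) := by
  intro ξ
  have hcp' : (cp : ℂ) ≠ 0 := by exact_mod_cast hcp.ne'
  have hb' : (b : ℂ) ≠ 0 := by exact_mod_cast hb
  set ω : ℝ := (ξm - ξ) / b with hω
  set K : ℝ := -(1 / b) * ξ * (d * τ - b * η) + (d / (2 * b)) * (ξ ^ 2 + τ ^ 2) with hK
  have hint : ∀ t : ℝ, f t * Complex.exp (Complex.I *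
      (((a / (2 * b)) * t ^ 2 - (1 / b) * t * (ξ - τ) - (1 / b) * ξ * (d * τ - b * η)
        + (d / (2 * b)) * (ξ ^ 2 + τ ^ 2) : ℝ) : ℂ))
      = c₀ * Complex.exp ((-(cp:ℂ)) * (t:ℂ) ^ 2
          + (((2 * cp * tm : ℝ) : ℂ) + Complex.I * (ω : ℂ)) * (t:ℂ)
          + (((-(cp * tm ^ 2) : ℝ) : ℂ) + Complex.I * (K : ℂ))) := by
    intro t
    rw [hf]
    simp only
    rw [mul_assoc, mul_assoc, ← Complex.exp_add, ← Complex.exp_add]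
    congr 1
    rw [hω, hK]
    push_cast
    ring
  have hquad := integral_cexp_quadratic (b := -(cp:ℂ))
    (by simpa using hcp) ((((2 * cp * tm : ℝ) : ℂ) + Complex.I * (ω : ℂ)))
    ((((-(cp * tm ^ 2) : ℝ) : ℂ) + Complex.I * (K : ℂ)))
  have hOL : OLCT a b d τ η f ξ = ((Real.sqrt (2 * π * |b|))⁻¹ : ℝ) *
      (c₀ * (((Real.sqrt (π / cp) : ℝ) : ℂ) *
        Complex.exp (((-(ω ^ 2 / (4 * cp)) : ℝ) : ℂ) + Complex.I * ((K + tm * ω : ℝ) : ℂ)))) := by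
    rw [OLCT]
    simp_rw [hint]
    rw [MeasureTheory.integral_const_mul, hquad]
    have hpow : ((π:ℂ) / - -(cp:ℂ)) ^ (1/2 : ℂ) = ((Real.sqrt (π / cp) : ℝ) : ℂ) := by
      rw [neg_neg, show ((π:ℂ) / (cp:ℂ)) = ((π / cp : ℝ) : ℂ) by push_cast; ring,
        show (1/2 : ℂ) = ((1/2 : ℝ) : ℂ) by norm_num,
        ← Complex.ofReal_cpow (by positivity), ← Real.sqrt_eq_rpow]
    have hexps : (((-(cp * tm ^ 2) : ℝ) : ℂ) + Complex.I * (K : ℂ))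
        - ((((2 * cp * tm : ℝ) : ℂ) + Complex.I * (ω : ℂ))) ^ 2 / (4 * -(cp:ℂ))
        = ((-(ω ^ 2 / (4 * cp)) : ℝ) : ℂ) + Complex.I * ((K + tm * ω : ℝ) : ℂ) := by
      rw [sq_expand]
      push_cast
      field_simp
      ring
    rw [hpow, hexps]
  rw [hOL]
  have h1 : ‖(((Real.sqrt (2 * π * |b|))⁻¹ : ℝ) : ℂ)‖ = (Real.sqrt (2 * π * |b|))⁻¹ := by
    rw [Complex.norm_real, Real.norm_eq_abs, abs_of_nonneg (by positivity)]
  have h2 : ‖(((Real.sqrt (π / cp) : ℝ)) : ℂ)‖ = Real.sqrt (π / cp) := by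
    rw [Complex.norm_real, Real.norm_eq_abs, abs_of_nonneg (Real.sqrt_nonneg _)]
  have h3 : ‖Complex.exp (((-(ω ^ 2 / (4 * cp)) : ℝ) : ℂ) + Complex.I * ((K + tm * ω : ℝ) : ℂ))‖
      = Real.exp (-(ω ^ 2 / (4 * cp))) := by
    rw [Complex.norm_exp]
    congr 1
    simp only [Complex.add_re, Complex.ofReal_re, Complex.mul_re, Complex.I_re,
      Complex.I_im, Complex.ofReal_im]
    ring
  rw [norm_mul, norm_mul, norm_mul, h1, h2, h3]
  have hs : Real.sqrt (2 * π * |b|) ^ 2 = 2 * π * |b| := Real.sq_sqrt (by positivity)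
  have hs2 : Real.sqrt (π / cp) ^ 2 = π / cp := Real.sq_sqrt (by positivity)
  have hexp : Real.exp (-(ω ^ 2 / (4 * cp))) ^ 2
      = Real.exp (-((2 * cp * b ^ 2)⁻¹ * (ξ - ξm) ^ 2)) := by
    rw [← Real.exp_nat_mul]
    congr 1
    rw [hω]
    field_simp
    ring
  rw [mul_pow, mul_pow, mul_pow, hs2, hexp, inv_pow, hs]
  ring

lemma gauss_int (α : ℝ) : ∫ x : ℝ, Real.exp (-α * x ^ 2) = Real.sqrt (π / α) :=
  integral_gaussian α

/-- **Equality case of the second-order Heisenberg uncertainty principle in the OLCT domain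
(equation (72)).** The Gaussian chirp
`f(t) = c₀ e^{−c_p(t−tₘ)²} e^{i(((ξₘ−τ)/b)t − (a/(2b))t²)}` saturates the bound of
Corollary 3.2:
`(∫ (t−tₘ)²|f(t)|² dt)(∫ (ξ−ξₘ)²|O_f^J(ξ)|² dξ) = (b²/4)(∫ |f(t)|² dt)²`. -/
theorem heisenberg_uncertainty_olct_equality (a b c d τ η : ℝ)
    (hb : b ≠ 0) (hdet : a * d - b * c = 1) (tm ξm : ℝ)
    (c₀ : ℂ) (hc₀ : c₀ ≠ 0) (cp : ℝ) (hcp : 0 < cp)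
    (f : ℝ → ℂ)
    (hf : f = fun t : ℝ => c₀ * Complex.exp (-((cp : ℂ) * ((t : ℂ) - (tm : ℂ)) ^ 2)) *
      Complex.exp (Complex.I *
        ((((ξm - τ) / b) * t - (a / (2 * b)) * t ^ 2 : ℝ) : ℂ))) :
    (∫ t : ℝ, (t - tm) ^ 2 * ‖f t‖ ^ 2) *
      (∫ ξ : ℝ, (ξ - ξm) ^ 2 * ‖OLCT a b d τ η f ξ‖ ^ 2) =
    (b ^ 2 / 4) * (∫ t : ℝ, ‖f t‖ ^ 2) ^ 2 := by
  have hfn : ∀ t : ℝ, ‖f t‖ ^ 2 = ‖c₀‖ ^ 2 * Real.exp (-(2 * cp) * (t - tm) ^ 2) := by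
    intro t
    rw [hf]
    simp only
    rw [norm_mul, norm_mul]
    have e1 : ‖Complex.exp (-((cp : ℂ) * ((t : ℂ) - (tm : ℂ)) ^ 2))‖
        = Real.exp (-(cp * (t - tm) ^ 2)) := by
      rw [show -((cp : ℂ) * ((t : ℂ) - (tm : ℂ)) ^ 2) = ((-(cp * (t - tm) ^ 2) : ℝ) : ℂ) by
        push_cast; ring]
      rw [Complex.norm_exp, Complex.ofReal_re]
    have e2 : ‖Complex.exp (Complex.I *
        ((((ξm - τ) / b) * t - (a / (2 * b)) * t ^ 2 : ℝ) : ℂ))‖ = 1 := by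
      rw [Complex.norm_exp,
        show (Complex.I * ((((ξm - τ) / b) * t - (a / (2 * b)) * t ^ 2 : ℝ) : ℂ)).re = 0 by
          simp only [Complex.mul_re, Complex.I_re, Complex.I_im, Complex.ofReal_re,
            Complex.ofReal_im]; ring,
        Real.exp_zero]
    rw [e1, e2, mul_one, mul_pow, sq (Real.exp _), ← Real.exp_add]
    congr 2
    ring
  -- first integral
  have hI1 : ∫ t : ℝ, (t - tm) ^ 2 * ‖f t‖ ^ 2
      = ‖c₀‖ ^ 2 * (Real.sqrt (π / (2 * cp)) / (2 * (2 * cp))) := by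
    simp_rw [hfn, show ∀ t : ℝ, (t - tm) ^ 2 * (‖c₀‖ ^ 2 * Real.exp (-(2 * cp) * (t - tm) ^ 2))
        = ‖c₀‖ ^ 2 * ((t - tm) ^ 2 * Real.exp (-(2 * cp) * (t - tm) ^ 2)) from fun t => by ring,
      MeasureTheory.integral_const_mul]
    have hshift := integral_sub_right_eq_self
      (μ := volume) (fun x : ℝ => x ^ 2 * Real.exp (-(2 * cp) * x ^ 2)) tm
    rw [hshift, gauss_sq_moment (by positivity)]
  -- third integral
  have hI3 : ∫ t : ℝ, ‖f t‖ ^ 2 = ‖c₀‖ ^ 2 * Real.sqrt (π / (2 * cp)) := by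
    simp_rw [hfn, MeasureTheory.integral_const_mul]
    have hshift := integral_sub_right_eq_self
      (μ := volume) (fun x : ℝ => Real.exp (-(2 * cp) * x ^ 2)) tm
    rw [hshift, gauss_int]
  -- second integral
  have hI2 : ∫ ξ : ℝ, (ξ - ξm) ^ 2 * ‖OLCT a b d τ η f ξ‖ ^ 2
      = ‖c₀‖ ^ 2 / (2 * π * |b|) * (π / cp)
          * (Real.sqrt (π / (2 * cp * b ^ 2)⁻¹) / (2 * (2 * cp * b ^ 2)⁻¹)) := by
    have hO := OLCT_norm_sq a b c d τ η hb hdet tm ξm c₀ hc₀ cp hcp f hf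
    simp_rw [hO, show ∀ ξ : ℝ, (ξ - ξm) ^ 2 * (‖c₀‖ ^ 2 / (2 * π * |b|) * (π / cp) *
        Real.exp (-((2 * cp * b ^ 2)⁻¹ * (ξ - ξm) ^ 2)))
        = (‖c₀‖ ^ 2 / (2 * π * |b|) * (π / cp)) *
          ((ξ - ξm) ^ 2 * Real.exp (-(2 * cp * b ^ 2)⁻¹ * (ξ - ξm) ^ 2)) from fun ξ => by ring,
      MeasureTheory.integral_const_mul]
    have hshift := integral_sub_right_eq_self
      (μ := volume) (fun x : ℝ => x ^ 2 * Real.exp (-(2 * cp * b ^ 2)⁻¹ * x ^ 2)) ξm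
    rw [hshift, gauss_sq_moment (by positivity)]
  rw [hI1, hI2, hI3]
  set C := ‖c₀‖ ^ 2 with hC
  set s1 := Real.sqrt (π / (2 * cp)) with hs1
  set s2 := Real.sqrt (π / (2 * cp * b ^ 2)⁻¹) with hs2
  have hπ : (0:ℝ) < π := pi_pos
  have hab : (0:ℝ) < |b| := abs_pos.mpr hb
  have hsq1 : s1 ^ 2 = π / (2 * cp) := Real.sq_sqrt (by positivity)
  have hprod : s1 * s2 = π * |b| := by
    rw [hs1, hs2, show π / (2 * cp * b ^ 2)⁻¹ = π * (2 * cp * b ^ 2) by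
        rw [div_eq_mul_inv, inv_inv],
      ← Real.sqrt_mul (by positivity),
      show π / (2 * cp) * (π * (2 * cp * b ^ 2)) = (π * |b|) ^ 2 by
        rw [mul_pow, sq_abs]; field_simp]
    exact Real.sqrt_sq (by positivity)
  calc C * (s1 / (2 * (2 * cp))) * (C / (2 * π * |b|) * (π / cp) * (s2 / (2 * (2 * cp * b ^ 2)⁻¹)))
      = C ^ 2 * (s1 * s2) * b ^ 2 / (8 * cp * |b|) := by
        field_simp
        ring
    _ = C ^ 2 * (π * |b|) * b ^ 2 / (8 * cp * |b|) := by rw [hprod]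
    _ = b ^ 2 / 4 * (C * s1) ^ 2 := by
        rw [mul_pow, hsq1]
        field_simp
        ring
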